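/- Fix a grid 0 = t_0 < t_1 < ⋯ < t_m = 1 with Δt_i := t_i − t_{i−1}, and let 0 ≤ δ < δ'; set t_i^δ := (1+δ)·t_i and t_i^{δ'} := (1+δ')·t_i. Given any function ω : [0, 1+δ] → ℝ^d, define ω^{δ',δ} : [0, 1+δ'] → ℝ^d by ω^{δ',δ}(t) := ω( (t − t_i^{δ'} + t_i^δ) ∧ t_{i+1}^δ ) for t ∈ [t_i^{δ'}, t_{i+1}^{δ'}], i = 0, …, m−1. Set ε_i := ((δ' − δ)/(1 + δ'))·Δt_i for i = 1, …, m; then 0 ≤ ε_i < Δt_i, and for every t ∈ [0,1] one has ω^{δ',δ}((1+δ')·t) = ω( (1+δ)·b_ε(t) ), where b_ε is the backward function associated with the grid (t_i)_{0≤i≤m} and the shifts ε. -/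

import Mathlib

/-- The rescaled extension `ω^{δ',δ}` of a path `ω : [0,1+δ] → ℝ^d` to `[0,1+δ']`
is a backward time-change of `ω` : with `ε_i = ((δ'−δ)/(1+δ'))·Δt_i` one has
`0 ≤ ε_i < Δt_i` and `ω^{δ',δ}((1+δ')·t) = ω((1+δ)·b_ε(t))` for all `t ∈ [0,1]`,
where `b_ε` is the backward function for the grid `(t_i)` and shifts `ε`. -/
theorem stmt12 {d : ℕ} (m : ℕ) (t : Fin (m + 1) → ℝ) (ht0 : t 0 = 0)
    (htm : t (Fin.last m) = 1) (hmono : StrictMono t)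
    (δ δ' : ℝ) (hδ : 0 ≤ δ) (hδδ' : δ < δ')
    (ω ωext : ℝ → EuclideanSpace ℝ (Fin d))
    (hωext : ∀ i : Fin m, ∀ s ∈ Set.Icc ((1 + δ') * t i.castSucc) ((1 + δ') * t i.succ),
      ωext s = ω (min (s - (1 + δ') * t i.castSucc + (1 + δ) * t i.castSucc)
        ((1 + δ) * t i.succ)))
    (b : ℝ → ℝ) (hb0 : b 0 = 0)
    (hb : ∀ i : Fin m, ∀ s ∈ Set.Ioc (t i.castSucc) (t i.succ),
      b s = t i.succ - max ((t i.succ - t i.castSucc) -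
        ((t i.succ - t i.castSucc) /
            ((t i.succ - t i.castSucc) - ((δ' - δ) / (1 + δ')) * (t i.succ - t i.castSucc))) *
          (s - t i.castSucc)) 0) :
    (∀ i : Fin m, 0 ≤ ((δ' - δ) / (1 + δ')) * (t i.succ - t i.castSucc) ∧
        ((δ' - δ) / (1 + δ')) * (t i.succ - t i.castSucc) < t i.succ - t i.castSucc) ∧
      ∀ s ∈ Set.Icc (0 : ℝ) 1, ωext ((1 + δ') * s) = ω ((1 + δ) * b s) := by
  have hδ'pos : (0:ℝ) < 1 + δ' := by linarith
  have hδpos : (0:ℝ) < 1 + δ := by linarith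
  have hcpos : 0 < (δ' - δ) / (1 + δ') := div_pos (by linarith) hδ'pos
  have hc1 : (δ' - δ) / (1 + δ') < 1 := (div_lt_one hδ'pos).mpr (by linarith)
  constructor
  · intro i
    have hΔ : 0 < t i.succ - t i.castSucc := sub_pos.mpr (hmono (Fin.castSucc_lt_succ (i := i)))
    refine ⟨mul_nonneg hcpos.le hΔ.le, ?_⟩
    nlinarith
  intro s hs
  have hm : 0 < m := by
    rcases Nat.eq_zero_or_pos m with h | h
    · exfalso; subst h
      have : t (Fin.last 0) = t 0 := rfl
      rw [this, ht0] at htm; norm_num at htm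
    · exact h
  rcases eq_or_lt_of_le hs.1 with h0 | h0
  · -- s = 0
    have hs0 : s = 0 := h0.symm
    subst hs0
    set i : Fin m := ⟨0, hm⟩ with hi
    have hc0 : i.castSucc = (0 : Fin (m+1)) := rfl
    have ht1 : 0 < t i.succ := by
      rw [← ht0]; exact hmono (by rw [← hc0]; exact Fin.castSucc_lt_succ (i := i))
    have hmem : (1 + δ') * 0 ∈ Set.Icc ((1 + δ') * t i.castSucc) ((1 + δ') * t i.succ) := by
      rw [hc0, ht0, Set.mem_Icc]
      refine ⟨le_refl _, ?_⟩
      have := mul_nonneg hδ'pos.le ht1.le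
      linarith
    have := hωext i _ hmem
    rw [mul_zero] at this ⊢
    rw [hb0, mul_zero, this, hc0, ht0]
    congr 1
    have h1 : (0:ℝ) - (1 + δ') * 0 + (1 + δ) * 0 = 0 := by ring
    rw [h1]
    exact (min_eq_left (mul_nonneg hδpos.le ht1.le))
  · -- 0 < s
    classical
    set F := Finset.univ.filter (fun j : Fin (m+1) => t j < s) with hF
    have hne : F.Nonempty := ⟨0, by simp [hF, ht0, h0]⟩
    set i := F.max' hne with hidef
    have hi_lt : t i < s := by
      have := F.max'_mem hne
      simp only [hF, Finset.mem_filter] at this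
      exact this.2
    have hi_ne : i ≠ Fin.last m := by
      intro h; rw [h, htm] at hi_lt; linarith [hs.2]
    obtain ⟨j, hj⟩ := Fin.exists_castSucc_eq.mpr hi_ne
    rw [← hj] at hi_lt
    have hs_le : s ≤ t j.succ := by
      by_contra h
      push_neg at h
      have hmem : j.succ ∈ F := by simp [hF, h]
      have := F.le_max' _ hmem
      rw [← hidef] at this
      exact absurd (lt_of_lt_of_le (by rw [← hj]; exact Fin.castSucc_lt_succ (i := j)) this) (lt_irrefl _)
    have hΔ : 0 < t j.succ - t j.castSucc := sub_pos.mpr (hmono (Fin.castSucc_lt_succ (i := j)))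
    set tc := t j.castSucc
    set ts := t j.succ
    have hbs := hb j s ⟨hi_lt, hs_le⟩
    have hmem : (1 + δ') * s ∈ Set.Icc ((1 + δ') * tc) ((1 + δ') * ts) :=
      ⟨mul_le_mul_of_nonneg_left hi_lt.le hδ'pos.le,
       mul_le_mul_of_nonneg_left hs_le hδ'pos.le⟩
    rw [hωext j _ hmem, hbs]
    congr 1
    have hΔne : ts - tc ≠ 0 := hΔ.ne'
    have hkey : (ts - tc) / ((ts - tc) - ((δ' - δ) / (1 + δ')) * (ts - tc))
        = (1 + δ') / (1 + δ) := by
      have h1 : (ts - tc) - ((δ' - δ) / (1 + δ')) * (ts - tc)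
          = (ts - tc) * (1 + δ) / (1 + δ') := by
        field_simp; ring
      rw [h1]
      rw [div_div_eq_mul_div]
      rw [mul_comm (ts - tc) (1 + δ), mul_comm (ts - tc) (1 + δ')]
      exact mul_div_mul_right _ _ hΔne
    rw [hkey]
    rcases le_or_gt ((1 + δ') * (s - tc)) ((1 + δ) * (ts - tc)) with hcase | hcase
    · have h2 : ((1 + δ') / (1 + δ)) * (s - tc) ≤ ts - tc := by
        rw [div_mul_eq_mul_div, div_le_iff₀ hδpos]
        nlinarith
      rw [min_eq_left (by nlinarith), max_eq_left (by linarith)]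
      field_simp
      ring
    · have h2 : ts - tc ≤ ((1 + δ') / (1 + δ)) * (s - tc) := by
        rw [div_mul_eq_mul_div, le_div_iff₀ hδpos]
        nlinarith
      rw [min_eq_right (by nlinarith), max_eq_right (by linarith)]
      ring
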